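/- Let X^{(1)},...,X^{(M)} be n×n complex matrices and let Y be the Mn×Mn block matrix whose (i,i+1) block is X^{(i)} for 1≤i≤M−1, whose (M,1) block is X^{(M)}, and all other blocks zero. Then for every complex number z, det(z^M·I_n − X^{(1)}X^{(2)}⋯X^{(M)}) = ±det(Y − z·I_{Mn}); in particular every eigenvalue λ of the product X^{(1)}⋯X^{(M)} is an eigenvalue of Y^M. -/

import Mathlib

open Matrix

open Finset

namespace CycAux

variable {M n : ℕ}

noncomputable def gP (X : Fin M → Matrix (Fin n) (Fin n) ℂ) (a b : ℕ) :
    Matrix (Fin n) (Fin n) ℂ :=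
  (((List.ofFn X).drop a).take (b - a)).prod


lemma gP_self (X : Fin M → Matrix (Fin n) (Fin n) ℂ) (a : ℕ) : gP X a a = 1 := by
  simp [gP]

lemma gP_succ (X : Fin M → Matrix (Fin n) (Fin n) ℂ) {a b : ℕ} (hab : a < b)
    (ha : a < M) : gP X a b = X ⟨a, ha⟩ * gP X (a + 1) b := by
  unfold gP
  rw [List.drop_eq_getElem_cons (by simpa using ha), show b - a = (b - (a+1)) + 1 by omega,
    List.take_succ_cons, List.prod_cons, List.getElem_ofFn]

lemma gP_mul_last [NeZero M] (X : Fin M → Matrix (Fin n) (Fin n) ℂ) :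
    gP X 0 (M - 1) * X ⟨M - 1, by have := NeZero.pos M; omega⟩ = (List.ofFn X).prod := by
  have hM := NeZero.pos M
  have hlen : M - 1 < (List.ofFn X).length := by simpa using by omega
  have h1 : (List.ofFn X).drop (M-1) = [X ⟨M-1, by omega⟩] := by
    rw [List.drop_eq_getElem_cons hlen, List.getElem_ofFn]
    have : (List.ofFn X).drop (M - 1 + 1) = [] := by
      rw [show M - 1 + 1 = M by omega]
      simp
    rw [this]
  calc gP X 0 (M-1) * X ⟨M-1, by omega⟩
      = (((List.ofFn X).take (M-1)).prod) * ((List.ofFn X).drop (M-1)).prod := by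
        rw [h1]; simp [gP]
    _ = (List.ofFn X).prod := by rw [← List.prod_append, List.take_append_drop]

noncomputable def Um (X : Fin M → Matrix (Fin n) (Fin n) ℂ) (z : ℂ) :
    Matrix (Fin M × Fin n) (Fin M × Fin n) ℂ :=
  fun p q => if (q.1:ℕ) = (p.1:ℕ) + 1 then -(X p.1 p.2 q.2) else if p = q then z else 0

noncomputable def Vm (X : Fin M → Matrix (Fin n) (Fin n) ℂ) (z : ℂ) :
    Matrix (Fin M × Fin n) (Fin M × Fin n) ℂ :=
  fun p q => if (p.1:ℕ) ≤ (q.1:ℕ) then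
    z⁻¹ ^ ((q.1:ℕ) - (p.1:ℕ) + 1) * gP X (p.1:ℕ) (q.1:ℕ) p.2 q.2 else 0

noncomputable def cm (X : Fin M → Matrix (Fin n) (Fin n) ℂ) :
    Matrix (Fin M × Fin n) (Fin n) ℂ :=
  fun p q => if (p.1:ℕ) = M - 1 then X p.1 p.2 q else 0

noncomputable def rm (M n : ℕ) : Matrix (Fin n) (Fin M × Fin n) ℂ :=
  fun q p => if (p.1:ℕ) = 0 ∧ q = p.2 then -1 else 0

lemma fin_succ_val [NeZero M] (i j : Fin M) :
    (j = i + 1) ↔ ((j:ℕ) = (i:ℕ)+1 ∨ ((i:ℕ) = M-1 ∧ (j:ℕ) = 0)) := by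
  have hM : 0 < M := NeZero.pos M
  have hi := i.isLt; have hj := j.isLt
  rw [Fin.ext_iff, Fin.val_add, Fin.val_one']
  rcases Nat.lt_or_ge ((i:ℕ)+1) M with h | h
  · rw [Nat.mod_eq_of_lt (by omega : (1:ℕ) < M), Nat.mod_eq_of_lt h]
    omega
  · rcases Nat.eq_or_lt_of_le hM with h1 | h1
    · have hMe : M = 1 := h1.symm
      subst hMe
      simp [Nat.mod_one]
    · rw [Nat.mod_eq_of_lt (by omega : (1:ℕ) < M),
        show (i:ℕ) + 1 = M by omega, Nat.mod_self]
      omega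

lemma U_mul_V [NeZero M] (X : Fin M → Matrix (Fin n) (Fin n) ℂ) {z : ℂ} (hz : z ≠ 0) :
    Um X z * Vm X z = 1 := by
  ext ⟨i, k⟩ ⟨j, l⟩
  rw [Matrix.mul_apply]
  have hsplit : ∀ q : Fin M × Fin n,
      Um X z (i,k) q * Vm X z q (j,l)
      = (if (q.1:ℕ) = (i:ℕ) + 1 then -(X i k q.2) * Vm X z q (j,l) else 0)
        + (if q = (i,k) then z * Vm X z (i,k) (j,l) else 0) := by
    rintro ⟨m, b⟩
    by_cases h1 : (m:ℕ) = (i:ℕ) + 1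
    · have h2 : ¬ ((m, b) = (i, k)) := by
        simp only [Prod.mk.injEq, not_and]
        intro h; exact absurd (congrArg Fin.val h) (by omega)
      simp [Um, h1, h2, Prod.ext_iff]
    · by_cases h3 : (m, b) = (i, k)
      · rw [h3]
        simp only [Prod.mk.injEq] at h3
        simp [Um, h1, h3.1.symm ▸ h1]
      · simp only [Prod.mk.injEq] at h3
        have : ¬ ((i, k) = (m, b)) := by simp only [Prod.mk.injEq, not_and]; intro h h'
                                         exact h3 ⟨h.symm, h'.symm⟩
        simp [Um, h1, this, h3]
  rw [Finset.sum_congr rfl fun q _ => hsplit q, Finset.sum_add_distrib]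
  have hB : (∑ q : Fin M × Fin n, if q = (i,k) then z * Vm X z (i,k) (j,l) else 0)
      = z * Vm X z (i,k) (j,l) := by
    simp
  rw [hB]
  have hik : ((1 : Matrix (Fin M × Fin n) (Fin M × Fin n) ℂ) (i,k) (j,l))
      = if (i,k) = (j,l) then 1 else 0 := Matrix.one_apply
  rw [hik]
  by_cases h : (i:ℕ) + 1 < M
  · set i' : Fin M := ⟨(i:ℕ)+1, h⟩ with hi'
    have hA : (∑ q : Fin M × Fin n,
        if (q.1:ℕ) = (i:ℕ) + 1 then -(X i k q.2) * Vm X z q (j,l) else 0)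
        = ∑ b : Fin n, -(X i k b) * Vm X z (i', b) (j,l) := by
      rw [Fintype.sum_prod_type, Finset.sum_comm]
      refine Finset.sum_congr rfl fun b _ => ?_
      rw [Finset.sum_eq_single i']
      · simp [hi']
      · intro m _ hm
        have : ¬ ((m:ℕ) = (i:ℕ)+1) := fun hc => hm (Fin.ext (by simpa using hc))
        simp [this]
      · simp
    rw [hA]
    rcases lt_trichotomy (j:ℕ) (i:ℕ) with hlt | heq | hgt
    · have h1 : ¬ ((i':ℕ) ≤ (j:ℕ)) := by simp [hi']; omega
      have h2 : ¬ ((i:ℕ) ≤ (j:ℕ)) := by omega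
      have h3 : ¬ ((i,k) = (j,l)) := by
        simp only [Prod.mk.injEq, not_and]; intro hc; exact absurd (congrArg Fin.val hc) (by omega)
      simp [Vm, h1, h2, h3]
    · have h1 : ¬ ((i':ℕ) ≤ (j:ℕ)) := by simp [hi']; omega
      have hji : j = i := Fin.ext heq
      subst hji
      simp [Vm, h1, gP, Matrix.one_apply, Prod.ext_iff, ← mul_assoc,
        mul_inv_cancel₀ hz]
    · have h1 : ((i':ℕ) : ℕ) ≤ (j:ℕ) := by simp [hi']; omega
      have h2 : (i:ℕ) ≤ (j:ℕ) := le_of_lt hgt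
      have h3 : ¬ ((i,k) = (j,l)) := by
        simp only [Prod.mk.injEq, not_and]; intro hc; exact absurd (congrArg Fin.val hc) (by omega)
      have hrec : gP X (i:ℕ) (j:ℕ) = X i * gP X ((i:ℕ)+1) (j:ℕ) := by
        rw [gP_succ X hgt i.isLt]
      rw [if_neg h3]
      simp only [Vm, if_pos h1, if_pos h2, hi']
      rw [show (j:ℕ) - ((i:ℕ)+1) + 1 = (j:ℕ) - (i:ℕ) by omega, hrec, Matrix.mul_apply,
        Finset.mul_sum, Finset.mul_sum]
      rw [← Finset.sum_add_distrib]
      refine Finset.sum_eq_zero fun b _ => ?_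
      have hcz : z * z⁻¹ ^ ((j:ℕ) - (i:ℕ) + 1) = z⁻¹ ^ ((j:ℕ) - (i:ℕ)) := by
        rw [pow_succ,
          show z * (z⁻¹ ^ ((j:ℕ) - (i:ℕ)) * z⁻¹) = z⁻¹ ^ ((j:ℕ) - (i:ℕ)) * (z * z⁻¹) by ring,
          mul_inv_cancel₀ hz, mul_one]
      rw [if_pos (show (i:ℕ)+1 ≤ (j:ℕ) by omega)]
      linear_combination X i k b * gP X ((i:ℕ)+1) (j:ℕ) b l * hcz
  · have hA : (∑ q : Fin M × Fin n,
        if (q.1:ℕ) = (i:ℕ) + 1 then -(X i k q.2) * Vm X z q (j,l) else 0) = 0 := by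
      refine Finset.sum_eq_zero fun q _ => ?_
      have : ¬ ((q.1:ℕ) = (i:ℕ)+1) := by have := q.1.isLt; omega
      simp [this]
    rw [hA, zero_add]
    have hj := j.isLt
    rcases eq_or_lt_of_le (show (j:ℕ) ≤ (i:ℕ) by omega) with heq | hlt
    · have hji : j = i := Fin.ext heq
      subst hji
      simp [Vm, gP, Matrix.one_apply, Prod.ext_iff, ← mul_assoc, mul_inv_cancel₀ hz]
    · have h2 : ¬ ((i:ℕ) ≤ (j:ℕ)) := by omega
      have h3 : ¬ ((i,k) = (j,l)) := by
        simp only [Prod.mk.injEq, not_and]; intro hc; exact absurd (congrArg Fin.val hc) (by omega)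
      simp [Vm, h2, h3]


lemma decomp [NeZero M] (X : Fin M → Matrix (Fin n) (Fin n) ℂ)
    (Y : Matrix (Fin M × Fin n) (Fin M × Fin n) ℂ)
    (hY : ∀ (i j : Fin M) (k l : Fin n),
      Y (i, k) (j, l) = if j = i + 1 then X i k l else 0) (z : ℂ) :
    z • (1 : Matrix (Fin M × Fin n) (Fin M × Fin n) ℂ) - Y = Um X z + cm X * rm M n := by
  ext ⟨i, k⟩ ⟨j, l⟩
  have hcr : (cm X * rm M n) (i,k) (j,l)
      = if (i:ℕ) = M-1 ∧ (j:ℕ) = 0 then -(X i k l) else 0 := by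
    rw [Matrix.mul_apply]
    by_cases h1 : (i:ℕ) = M - 1
    · by_cases h2 : (j:ℕ) = 0
      · rw [Finset.sum_eq_single l]
        · simp [cm, rm, h1, h2]
        · intro b _ hb; simp [cm, rm, h1, h2, hb]
        · simp
      · simp [cm, rm, h1, h2]
    · simp [cm, rm, h1]
  rw [Matrix.sub_apply, Matrix.smul_apply, Matrix.one_apply, Matrix.add_apply, hcr, hY]
  have hij := fin_succ_val i j
  by_cases h1 : (j:ℕ) = (i:ℕ) + 1
  · have hji : j = i + 1 := hij.mpr (Or.inl h1)
    have hne : ¬ ((i,k) = (j,l)) := by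
      simp only [Prod.mk.injEq, not_and]
      intro hc; exact absurd (congrArg Fin.val hc) (by omega)
    have h2 : ¬ ((i:ℕ) = M-1 ∧ (j:ℕ) = 0) := by
      rintro ⟨-, hj0⟩; omega
    simp only [Um]
    rw [if_pos h1, if_pos hji, if_neg hne, if_neg h2, smul_zero, zero_sub, add_zero]
  · by_cases h2 : (i:ℕ) = M-1 ∧ (j:ℕ) = 0
    · have hji : j = i + 1 := hij.mpr (Or.inr h2)
      simp only [Um, h1, if_false, if_pos hji, if_pos h2, smul_ite, smul_zero,
        smul_eq_mul, mul_one, sub_eq_add_neg, mul_ite, mul_zero]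
    · have hji : ¬ j = i + 1 := fun hc => by rcases hij.mp hc with h | h
                                             exacts [h1 h, h2 h]
      simp [Um, h1, h2, hji]
      intro hi hj0; exact absurd ⟨hi, by simp [hj0]⟩ h2

lemma rVc [NeZero M] (X : Fin M → Matrix (Fin n) (Fin n) ℂ) (z : ℂ) :
    rm M n * (Vm X z * cm X) = (-(z⁻¹ ^ M)) • (List.ofFn X).prod := by
  have hM := NeZero.pos M
  ext a b
  rw [Matrix.mul_apply, Finset.sum_eq_single ((0 : Fin M), a)]
  · have hr : rm M n a ((0 : Fin M), a) = -1 := by simp [rm]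
    rw [hr]
    have hvc : (Vm X z * cm X) ((0 : Fin M), a) b
        = z⁻¹ ^ M * ((List.ofFn X).prod a b) := by
      rw [Matrix.mul_apply, Fintype.sum_prod_type]
      have hout : (∑ m : Fin M, ∑ p : Fin n,
            Vm X z ((0:Fin M), a) (m, p) * cm X (m, p) b)
          = ∑ p : Fin n, Vm X z ((0:Fin M), a) (⟨M-1, by omega⟩, p)
              * cm X ((⟨M-1, by omega⟩ : Fin M), p) b := by
        apply Finset.sum_eq_single_of_mem _ (Finset.mem_univ _)
        intro m _ hm
        have hmne : ¬ ((m:ℕ) = M-1) := fun hc => hm (Fin.ext hc)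
        refine Finset.sum_eq_zero fun p _ => ?_
        simp [cm, hmne]
      rw [hout]
      have h0 : ∀ p : Fin n, Vm X z ((0:Fin M), a) ((⟨M-1, by omega⟩ : Fin M), p)
          = z⁻¹ ^ M * gP X 0 (M-1) a p := by
        intro p
        simp only [Vm, Fin.val_zero, Nat.sub_zero, Nat.zero_le, if_true]
        rw [show M - 1 + 1 = M by omega]
      have h1 : ∀ p : Fin n, cm X ((⟨M-1, by omega⟩ : Fin M), p) b
          = X ⟨M-1, by omega⟩ p b := by
        intro p; simp [cm]
      simp only [h0, h1]
      have h2 : ∀ p : Fin n,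
          z⁻¹ ^ M * gP X 0 (M-1) a p * X (⟨M-1, by omega⟩ : Fin M) p b
          = z⁻¹ ^ M * (gP X 0 (M-1) a p * X (⟨M-1, by omega⟩ : Fin M) p b) :=
        fun p => by ring
      rw [Finset.sum_congr rfl fun p _ => h2 p, ← Finset.mul_sum, ← Matrix.mul_apply,
        gP_mul_last]
    rw [hvc, Matrix.smul_apply, smul_eq_mul]
    ring
  · intro q _ hq
    have hcond : ¬ ((q.1:ℕ) = 0 ∧ a = q.2) := by
      rintro ⟨hq1, hq2⟩
      exact hq (Prod.ext (Fin.ext (by simpa using hq1)) hq2.symm)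
    simp [rm, hcond]
    intro hq1 hq2; exact absurd ⟨by simp [hq1], hq2⟩ hcond
  · simp

lemma det_Um [NeZero M] (X : Fin M → Matrix (Fin n) (Fin n) ℂ) (z : ℂ) :
    (Um X z).det = z ^ (M * n) := by
  set e := finProdFinEquiv (m := M) (n := n) with he
  rw [← Matrix.det_submatrix_equiv_self e.symm (Um X z)]
  have hval : ∀ a : Fin (M * n), ((e.symm a).2:ℕ) + n * ((e.symm a).1:ℕ) = (a:ℕ) :=
    fun a => congrArg Fin.val (e.apply_symm_apply a)
  have htri : ((Um X z).submatrix e.symm e.symm).BlockTriangular id := by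
    intro a b hlt
    have hab : (b:ℕ) < (a:ℕ) := hlt
    rw [← hval a, ← hval b] at hab
    simp only [Matrix.submatrix_apply, Um]
    split_ifs with h1 h2
    · exfalso
      have hq1 : n * (((e.symm b).1):ℕ) = n * (((e.symm a).1):ℕ) + n := by rw [h1]; ring
      have := (e.symm a).2.isLt
      omega
    · exfalso
      rw [h2] at hab
      omega
    · rfl
  rw [Matrix.det_of_upperTriangular htri]
  have hdiag : ∀ a : Fin (M * n), ((Um X z).submatrix e.symm e.symm) a a = z := by
    intro a
    simp only [Matrix.submatrix_apply, Um]
    rw [if_neg (by omega)]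
    simp
  rw [Finset.prod_congr rfl fun a _ => hdiag a, Finset.prod_const, Finset.card_univ,
    Fintype.card_fin]

lemma key [NeZero M] (X : Fin M → Matrix (Fin n) (Fin n) ℂ)
    (Y : Matrix (Fin M × Fin n) (Fin M × Fin n) ℂ)
    (hY : ∀ (i j : Fin M) (k l : Fin n),
      Y (i, k) (j, l) = if j = i + 1 then X i k l else 0) (z : ℂ) :
    (z ^ M • (1 : Matrix (Fin n) (Fin n) ℂ) - (List.ofFn X).prod).det
      = (-1 : ℂ) ^ (M * n) * (Y - z • 1).det := by
  have hM := NeZero.pos M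
  set P := (List.ofFn X).prod with hP
  have heq : Set.EqOn
      (fun z : ℂ => (z ^ M • (1 : Matrix (Fin n) (Fin n) ℂ) - P).det)
      (fun z : ℂ => (-1 : ℂ) ^ (M * n) * (Y - z • 1).det) {(0:ℂ)}ᶜ := by
    intro z hz
    have hz : z ≠ 0 := hz
    simp only
    have h1 : z • (1 : Matrix (Fin M × Fin n) (Fin M × Fin n) ℂ) - Y
        = Um X z * (1 + Vm X z * (cm X * rm M n)) := by
      rw [mul_add, mul_one, ← mul_assoc, U_mul_V X hz, one_mul, decomp X Y hY z]
    have h2 : (z • (1 : Matrix (Fin M × Fin n) (Fin M × Fin n) ℂ) - Y).det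
        = z ^ (M * n) * ((1 : Matrix (Fin n) (Fin n) ℂ)
            + rm M n * (Vm X z * cm X)).det := by
      rw [h1, Matrix.det_mul, det_Um, ← Matrix.mul_assoc, Matrix.det_one_add_mul_comm]
    have h3 : (1 : Matrix (Fin n) (Fin n) ℂ) + rm M n * (Vm X z * cm X)
        = 1 - z⁻¹ ^ M • P := by
      rw [rVc, neg_smul, ← sub_eq_add_neg]
    have h4 : z ^ M • (1 : Matrix (Fin n) (Fin n) ℂ) - P
        = z ^ M • ((1 : Matrix (Fin n) (Fin n) ℂ) - z⁻¹ ^ M • P) := by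
      rw [smul_sub, smul_smul, ← mul_pow, mul_inv_cancel₀ hz, one_pow, one_smul]
    calc (z ^ M • (1 : Matrix (Fin n) (Fin n) ℂ) - P).det
        = (z ^ M) ^ n * ((1 : Matrix (Fin n) (Fin n) ℂ) - z⁻¹ ^ M • P).det := by
          rw [h4, Matrix.det_smul, Fintype.card_fin]
      _ = z ^ (M * n) * ((1 : Matrix (Fin n) (Fin n) ℂ)
            + rm M n * (Vm X z * cm X)).det := by rw [h3, ← pow_mul]
      _ = (z • (1 : Matrix (Fin M × Fin n) (Fin M × Fin n) ℂ) - Y).det := h2.symm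
      _ = (-1 : ℂ) ^ (M * n) * (Y - z • 1).det := by
          rw [show z • (1 : Matrix (Fin M × Fin n) (Fin M × Fin n) ℂ) - Y
              = -(Y - z • 1) from (neg_sub _ _).symm, Matrix.det_neg,
            Fintype.card_prod, Fintype.card_fin, Fintype.card_fin]
  have hcont1 : Continuous fun z : ℂ =>
      (z ^ M • (1 : Matrix (Fin n) (Fin n) ℂ) - P).det :=
    Continuous.matrix_det (((continuous_pow M).smul continuous_const).sub continuous_const)
  have hcont2 : Continuous fun z : ℂ => (-1 : ℂ) ^ (M * n) * (Y - z • 1).det :=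
    continuous_const.mul (Continuous.matrix_det
      (continuous_const.sub (continuous_id.smul continuous_const)))
  have := Continuous.ext_on (dense_compl_singleton (0:ℂ)) hcont1 hcont2 heq
  exact congrFun this z

end CycAux

/-- Cyclic block linearization: `det(z^M I - X^{(1)}⋯X^{(M)}) = ± det(Y - z I)`,
and every eigenvalue of the product is an eigenvalue of `Y^M`. -/
theorem stmt0 {M n : ℕ} [NeZero M] (X : Fin M → Matrix (Fin n) (Fin n) ℂ)
    (Y : Matrix (Fin M × Fin n) (Fin M × Fin n) ℂ)
    (hY : ∀ (i j : Fin M) (k l : Fin n),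
      Y (i, k) (j, l) = if j = i + 1 then X i k l else 0)
    (z : ℂ) :
    (∃ s : ℂ, (s = 1 ∨ s = -1) ∧
      Matrix.det (z ^ M • (1 : Matrix (Fin n) (Fin n) ℂ) - (List.ofFn X).prod)
        = s * Matrix.det (Y - z • 1)) ∧
    ∀ lam : ℂ, lam ∈ spectrum ℂ (List.ofFn X).prod → lam ∈ spectrum ℂ (Y ^ M) := by
  have hM := NeZero.pos M
  constructor
  · refine ⟨(-1 : ℂ) ^ (M * n), ?_, CycAux.key X Y hY z⟩
    rcases Nat.even_or_odd (M * n) with h | h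
    · exact Or.inl h.neg_one_pow
    · exact Or.inr h.neg_one_pow
  · intro lam hlam
    obtain ⟨w, hw⟩ := IsAlgClosed.exists_pow_nat_eq lam hM
    rw [spectrum.mem_iff] at hlam
    have hdet0 : (lam • (1 : Matrix (Fin n) (Fin n) ℂ) - (List.ofFn X).prod).det = 0 := by
      by_contra hne
      exact hlam (by
        rw [Algebra.algebraMap_eq_smul_one]
        exact (Matrix.isUnit_iff_isUnit_det _).mpr (Ne.isUnit hne))
    have hYdet : (Y - w • 1).det = 0 := by
      have hk := CycAux.key X Y hY w
      rw [hw, hdet0] at hk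
      rcases mul_eq_zero.mp hk.symm with h | h
      · exact absurd h (pow_ne_zero _ (by norm_num))
      · exact h
    have hcom : Commute Y (w • (1 : Matrix (Fin M × Fin n) (Fin M × Fin n) ℂ)) :=
      (Commute.one_right Y).smul_right w
    have hfact := hcom.geom_sum₂_mul M
    have h5 : lam • (1 : Matrix (Fin M × Fin n) (Fin M × Fin n) ℂ) - Y ^ M
        = -((∑ i ∈ Finset.range M, Y ^ i
              * (w • (1 : Matrix (Fin M × Fin n) (Fin M × Fin n) ℂ)) ^ (M - 1 - i))
            * (Y - w • 1)) := by
      rw [hfact, neg_sub, smul_pow, one_pow, hw]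
    have hdetY : (lam • (1 : Matrix (Fin M × Fin n) (Fin M × Fin n) ℂ) - Y ^ M).det = 0 := by
      rw [h5, ← neg_one_smul ℂ, Matrix.det_smul, Matrix.det_mul, hYdet]
      ring
    rw [spectrum.mem_iff, Algebra.algebraMap_eq_smul_one]
    intro hu
    have := (Matrix.isUnit_iff_isUnit_det _).mp hu
    rw [hdetY] at this
    simp at this
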